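/- Setting Q(c) = √(1 + σ(1/2 − (3/2)c²)) and P(c) = 1 − σ(1/2 − 3c²) for c² ∈ [0,1] and σ ∈ (0, 2/7), the equation Q(c) = P(c) has exactly one solution c² ∈ [0,1], namely c² = 1/6 − (5/(12σ))(1 − √(1 + 4σ/25)). -/
import Mathlib

open Real

theorem unique_critical_inclination (σ : ℝ) (hσ : σ ∈ Set.Ioo (0:ℝ) (2/7)) :
    ∀ x ∈ Set.Icc (0:ℝ) 1,
      (Real.sqrt (1 + σ * (1/2 - (3/2) * x)) = 1 - σ * (1/2 - 3 * x) ↔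
        x = 1/6 - (5/(12*σ)) * (1 - Real.sqrt (1 + 4*σ/25))) := by
  obtain ⟨hσ0, hσ2⟩ := hσ
  intro x hx
  obtain ⟨hx0, hx1⟩ := hx
  have hσ0' : σ ≠ 0 := ne_of_gt hσ0
  set s := Real.sqrt (1 + 4*σ/25) with hs_def
  have hs2 : s^2 = 1 + 4*σ/25 := Real.sq_sqrt (by linarith)
  have hs1 : 1 ≤ s := by
    rw [show (1:ℝ) = Real.sqrt 1 by simp]
    exact Real.sqrt_le_sqrt (by linarith)
  have hb : 0 ≤ 1 - σ * (1/2 - 3*x) := by nlinarith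
  have ha : 0 ≤ 1 + σ * (1/2 - (3/2)*x) := by nlinarith
  constructor
  · intro h
    have hsq : 1 + σ * (1/2 - (3/2) * x) = (1 - σ * (1/2 - 3 * x))^2 := by
      rw [← h, Real.sq_sqrt ha]
    have hfac : (12*σ*x - (2*σ - 5*(1-s))) * (12*σ*x - (2*σ - 5*(1+s))) = 0 := by
      linear_combination (-16) * hsq - 25 * hs2
    rcases mul_eq_zero.mp hfac with h1 | h2
    · have : 12*σ*x = 2*σ - 5*(1-s) := by linarith
      field_simp
      linarith
    · exfalso
      have hxs : 12*σ*x = 2*σ - 5*(1+s) := by linarith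
      nlinarith
  · intro h
    have hF1 : 12*σ*x - (2*σ - 5*(1-s)) = 0 := by
      rw [h]; field_simp; ring
    have hquad : 1 + σ * (1/2 - (3/2) * x) = (1 - σ * (1/2 - 3 * x))^2 := by
      linear_combination (-(12*σ*x - (2*σ - 5*(1+s)))/16) * hF1 - (25/16) * hs2
    rw [hquad, Real.sqrt_sq hb]
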